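/- Let Γ be a simple graph whose set Int(Γ) of internal vertices is nonempty. Then Radius(Int(Γ)) ≤ Radius(Γ), where Int(Γ) is the induced subgraph of Γ on the internal vertices and both radii are computed in ℕ∞. -/

import Mathlib

open SimpleGraph

/-- The link of a set `S` of vertices: all vertices adjacent to every vertex of `S`.
(For `S = ∅` this is all of `V`.) -/
def link {V : Type*} (G : SimpleGraph V) (S : Set V) : Set V :=
  {v : V | ∀ s ∈ S, G.Adj v s}

/-- A nonempty set of vertices is internal if its link is not a clique. -/
def IsInternalSet {V : Type*} (G : SimpleGraph V) (S : Set V) : Prop :=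
  S.Nonempty ∧ ¬ G.IsClique (link G S)

/-- A vertex is internal if its neighborhood is not a clique. -/
def IsInternalVertex {V : Type*} (G : SimpleGraph V) (v : V) : Prop :=
  ¬ G.IsClique (G.neighborSet v)

/-- The induced subgraph on the internal vertices. -/
def intGraph {V : Type*} (G : SimpleGraph V) :
    SimpleGraph ↥{v : V | IsInternalVertex G v} :=
  G.induce {v : V | IsInternalVertex G v}

/-- A graph is H-rigid if it is locally finite, all its internal sets are singletons,
and every nonempty finite set of vertices with nonempty link induces a subgraph all of
whose connected components are complete. -/
def HRigid {V : Type*} (G : SimpleGraph V) : Prop :=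
  (∀ v : V, (G.neighborSet v).Finite) ∧
  (∀ S : Set V, IsInternalSet G S → ∃ v : V, S = {v}) ∧
  (∀ S : Set V, S.Finite → S.Nonempty → (link G S).Nonempty →
    ∀ u w : ↥S, (G.induce S).Reachable u w → u = w ∨ (G.induce S).Adj u w)

/-- The eccentricity of a vertex: the sup of extended graph distances to all vertices. -/
noncomputable def eccentricity {V : Type*} (G : SimpleGraph V) (t : V) : ℕ∞ :=
  ⨆ s : V, G.edist t s

/-- The radius of a graph, valued in `ℕ∞`. -/
noncomputable def graphRadius {V : Type*} (G : SimpleGraph V) : ℕ∞ :=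
  ⨅ t : V, eccentricity G t

/-- The infinite line graph on `ℤ`: `i` and `j` adjacent iff `|i - j| = 1`. -/
def lineZ : SimpleGraph ℤ where
  Adj i j := |i - j| = 1
  symm := ⟨fun i j h => (abs_sub_comm j i).trans h⟩
  loopless := ⟨by intro i h; simp at h⟩

/-- The cycle graph on `ZMod n`: `i` and `j` adjacent iff `i - j = 1` or `j - i = 1`. -/
def cycleZMod (n : ℕ) : SimpleGraph (ZMod n) :=
  SimpleGraph.circulantGraph ({1} : Set (ZMod n))

section Aux
variable {V : Type*} (G : SimpleGraph V)

/-- A middle vertex of a geodesic step: if `edist u v = m+2`, there is an internal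
neighbor `w` of `u` with `edist w v = m+1`. -/
lemma exists_internal_step {u v : V} {m : ℕ} (h : G.edist u v = (m + 2 : ℕ)) :
    ∃ w : V, G.Adj u w ∧ IsInternalVertex G w ∧ G.edist w v = (m + 1 : ℕ) := by
  obtain ⟨p, hp⟩ := SimpleGraph.exists_walk_of_edist_eq_coe h
  cases p with
  | nil => simp at hp
  | cons hadj q =>
    rename_i w
    simp only [SimpleGraph.Walk.length_cons] at hp
    have hq : q.length = m + 1 := by omega
    have hwv_le : G.edist w v ≤ (m + 1 : ℕ) := hq ▸ SimpleGraph.edist_le q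
    have hwv_ge : (m + 1 : ℕ) ≤ G.edist w v := by
      have htri := G.edist_triangle (v := w) (u := u) (w := v)
      rw [h, SimpleGraph.edist_eq_one_iff_adj.mpr hadj] at htri
      have hne : G.edist w v ≠ ⊤ := ne_top_of_le_ne_top (ENat.coe_ne_top _) hwv_le
      lift G.edist w v to ℕ using hne with k hk
      rw [← Nat.cast_one, ← Nat.cast_add, Nat.cast_le] at htri
      exact_mod_cast by omega
    have hwv : G.edist w v = (m + 1 : ℕ) := le_antisymm hwv_le hwv_ge
    cases q with
    | nil => simp at hq
    | cons hadj2 r =>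
      rename_i w'
      simp only [SimpleGraph.Walk.length_cons] at hq
      have hr : r.length = m := by omega
      have hwv'_le : G.edist w' v ≤ (m : ℕ) := hr ▸ SimpleGraph.edist_le r
      have huw' : (2 : ℕ) ≤ G.edist u w' := by
        have htri := G.edist_triangle (v := w') (u := u) (w := v)
        rw [h] at htri
        have hne' : G.edist w' v ≠ ⊤ := ne_top_of_le_ne_top (ENat.coe_ne_top _) hwv'_le
        have hne2 : G.edist u w' ≠ ⊤ := by
          have := G.edist_triangle (v := w) (u := u) (w := w')
          rw [SimpleGraph.edist_eq_one_iff_adj.mpr hadj,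
            SimpleGraph.edist_eq_one_iff_adj.mpr hadj2] at this
          exact ne_top_of_le_ne_top (by norm_num) this
        lift G.edist w' v to ℕ using hne' with k hk
        lift G.edist u w' to ℕ using hne2 with l hl
        rw [Nat.cast_le] at hwv'_le
        rw [← Nat.cast_add, Nat.cast_le] at htri
        exact_mod_cast by omega
      have hnadj : ¬ G.Adj u w' := by
        intro hA
        rw [SimpleGraph.edist_eq_one_iff_adj.mpr hA] at huw'
        exact absurd huw' (by norm_num)
      have hnequ : u ≠ w' := by
        intro hE
        rw [hE, SimpleGraph.edist_self] at huw'
        exact absurd huw' (by norm_num)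
      refine ⟨w, hadj, ?_, hwv⟩
      intro hcl
      exact hnadj (hcl (by simpa using hadj.symm) (by simpa using hadj2) hnequ)

/-- Internal vertices are connected by geodesics through internal vertices. -/
lemma intGraph_edist_le (n : ℕ) :
    ∀ (u v : {v : V | IsInternalVertex G v}), G.edist u.1 v.1 = (n : ℕ) →
      (intGraph G).edist u v ≤ (n : ℕ) := by
  induction n using Nat.strong_induction_on with
  | _ n ih =>
    intro u v h
    match n with
    | 0 =>
      have : (u : V) = v := SimpleGraph.edist_eq_zero_iff.mp
        (show G.edist u.1 v.1 = 0 by exact_mod_cast h)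
      have : u = v := Subtype.ext this
      simp [this, SimpleGraph.edist_self]
    | 1 =>
      have hadj : G.Adj u.1 v.1 := SimpleGraph.edist_eq_one_iff_adj.mp
        (show G.edist u.1 v.1 = 1 by exact_mod_cast h)
      have hadj' : (intGraph G).Adj u v := hadj
      calc (intGraph G).edist u v ≤ _ := SimpleGraph.edist_le hadj'.toWalk
        _ ≤ (1 : ℕ) := by simp
    | m + 2 =>
      obtain ⟨w, hadj, hint, hwv⟩ := exists_internal_step G h
      have hadj' : (intGraph G).Adj u ⟨w, hint⟩ := hadj
      have hrec := ih (m + 1) (by omega) ⟨w, hint⟩ v hwv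
      calc (intGraph G).edist u v
          ≤ (intGraph G).edist u ⟨w, hint⟩ + (intGraph G).edist ⟨w, hint⟩ v :=
            SimpleGraph.edist_triangle
        _ ≤ 1 + (m + 1 : ℕ) := by
            exact add_le_add (le_of_eq (SimpleGraph.edist_eq_one_iff_adj.mpr hadj')) hrec
        _ = ((m + 2 : ℕ) : ℕ∞) := by push_cast; ring

/-- If `t` is not internal and `t'` is a neighbor of `t`, then `t'` is at least as
close to every other vertex. -/
lemma neighbor_edist_le {t t' s : V} (hcl : G.IsClique (G.neighborSet t))
    (ht' : G.Adj t t') (hst : s ≠ t) (hs : G.edist t s ≠ ⊤) :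
    G.edist t' s ≤ G.edist t s := by
  obtain ⟨p, hp⟩ := SimpleGraph.exists_walk_of_edist_ne_top hs
  cases p with
  | nil => exact absurd rfl hst.symm
  | cons hadj q =>
    rename_i x1
    rw [← hp]
    simp only [SimpleGraph.Walk.length_cons]
    by_cases hx : t' = x1
    · subst hx
      calc G.edist t' s ≤ (q.length : ℕ∞) := SimpleGraph.edist_le q
        _ ≤ ((q.length + 1 : ℕ) : ℕ∞) := by exact_mod_cast Nat.le_succ _
    · have hA : G.Adj t' x1 := hcl (by simpa using ht') (by simpa using hadj) hx
      calc G.edist t' s ≤ ((SimpleGraph.Walk.cons hA q).length : ℕ∞) :=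
            SimpleGraph.edist_le _
        _ = ((q.length + 1 : ℕ) : ℕ∞) := by simp

end Aux

/-- If a graph has an internal vertex, then the radius of its internal
graph is at most the radius of the graph. -/

theorem stmt18 {V : Type*} (G : SimpleGraph V)
    (hne : {v : V | IsInternalVertex G v}.Nonempty) :
    graphRadius (intGraph G) ≤ graphRadius G := by
  rw [graphRadius, graphRadius]
  apply le_iInf
  intro t
  by_cases htop : eccentricity G t = ⊤
  · exact htop ▸ le_top
  -- every vertex is at finite distance from t
  have hfin : ∀ s : V, G.edist t s ≠ ⊤ := by
    intro s hT
    apply htop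
    refine top_le_iff.mp ?_
    calc (⊤ : ℕ∞) = G.edist t s := hT.symm
      _ ≤ eccentricity G t := le_iSup (fun s => G.edist t s) s
  -- find an internal vertex t' with edist t' s ≤ edist t s for all internal s ≠ t'
  have hmain : ∃ t' : {v : V | IsInternalVertex G v},
      ∀ s : {v : V | IsInternalVertex G v}, G.edist t'.1 s.1 ≤ eccentricity G t := by
    by_cases hti : IsInternalVertex G t
    · exact ⟨⟨t, hti⟩, fun s => le_iSup (fun s => G.edist t s) s.1⟩
    · have hcl : G.IsClique (G.neighborSet t) := not_not.mp hti
      obtain ⟨v, hv⟩ := hne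
      have htv : t ≠ v := fun h => hti (h ▸ hv)
      have hfv := hfin v
      -- find an internal neighbor of t
      have hstep : ∃ w : V, G.Adj t w ∧ IsInternalVertex G w := by
        lift G.edist t v to ℕ using hfv with k hk
        match k with
        | 0 =>
          exact absurd (SimpleGraph.edist_eq_zero_iff.mp (by exact_mod_cast hk.symm)) htv
        | 1 =>
          exact ⟨v, SimpleGraph.edist_eq_one_iff_adj.mp (by exact_mod_cast hk.symm), hv⟩
        | m + 2 =>
          obtain ⟨w, h1, h2, _⟩ := exists_internal_step G (u := t) (v := v) (by exact_mod_cast hk.symm)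
          exact ⟨w, h1, h2⟩
      obtain ⟨w, hadj, hwint⟩ := hstep
      refine ⟨⟨w, hwint⟩, fun s => ?_⟩
      have hst : s.1 ≠ t := fun h => hti (h ▸ s.2)
      calc G.edist w s.1 ≤ G.edist t s.1 := neighbor_edist_le G hcl hadj hst (hfin s.1)
        _ ≤ eccentricity G t := le_iSup (fun s => G.edist t s) s.1
  obtain ⟨t', ht'⟩ := hmain
  refine iInf_le_of_le t' ?_
  rw [eccentricity]
  apply iSup_le
  intro s
  have hf : G.edist t'.1 s.1 ≠ ⊤ := by
    intro hT
    exact htop (top_le_iff.mp (hT ▸ ht' s))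
  lift G.edist t'.1 s.1 to ℕ using hf with k hk
  calc (intGraph G).edist t' s ≤ (k : ℕ∞) := intGraph_edist_le G k t' s hk.symm
    _ ≤ eccentricity G t := hk ▸ ht' s
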